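/- Let L ⊆ V be a subspace spanned by a subset of Δ. The space G_{Δ∩L}, spanned by fractions 1/∏_{j∈J} v_j^{n_j} with n_j > 0, v_j ∈ L, and (v_j, j∈J) spanning L, is already spanned by such fractions 1/∏_{j∈J} v_j^{n_j} in which (v_j, j∈J) is a basis of L. In particular, 1/((v₁+v₂) v₁ v₂) = 1/((v₁+v₂)² v₂) + 1/((v₁+v₂)² v₁) as rational functions of ξ, where v_i stands for the linear form ⟨ξ, v_i⟩. -/

import Mathlib

/-- The linear form `ξ ↦ ⟨ξ, u⟩` on `V*`, as a polynomial. -/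
noncomputable def linForm {K : Type*} [Field K] {d : ℕ} (u : Fin d → K) :
    MvPolynomial (Fin d) K :=
  ∑ i, MvPolynomial.C (u i) * MvPolynomial.X i

lemma linForm_eval {K : Type*} [Field K] {d : ℕ} (u x : Fin d → K) :
    MvPolynomial.eval x (linForm u) = ∑ i, u i * x i := by
  simp [linForm]

lemma linForm_ne_zero {K : Type*} [Field K] {d : ℕ} {u : Fin d → K} (hu : u ≠ 0) :
    linForm u ≠ 0 := by
  intro h
  apply hu
  funext i
  have := congrArg (MvPolynomial.eval (Pi.single i 1)) h
  rw [linForm_eval] at this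
  simpa [Pi.single_apply, Finset.sum_ite_eq'] using this

lemma linForm_sum {K : Type*} [Field K] {d : ℕ} {ι : Type*} (s : Finset ι)
    (c : ι → K) (u : ι → Fin d → K) :
    linForm (∑ j ∈ s, c j • u j) = ∑ j ∈ s, MvPolynomial.C (c j) * linForm (u j) := by
  simp only [linForm, Finset.sum_apply, Pi.smul_apply, smul_eq_mul, map_sum, map_mul,
    Finset.sum_mul, Finset.mul_sum, mul_assoc]
  rw [Finset.sum_comm]

lemma fieldaux1 {F : Type*} [Field F] (fj fj0 Q P : F) (h : fj * Q = fj0 * P)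
    (hfj : fj ≠ 0) (hQ : Q ≠ 0) : Q⁻¹ = fj * (fj0 * P)⁻¹ := by
  rw [← h, mul_inv, ← mul_assoc, mul_inv_cancel₀ hfj, one_mul]

lemma fieldaux2 {F : Type*} [Field F] (x y u X : F) (hy : y ≠ 0) (hX : X ≠ 0) :
    (-x / y) * (u * X⁻¹) = (x * u) * (-y * X)⁻¹ := by
  field_simp

lemma fieldaux3 {F : Type*} [Field F] (y u P : F) (hy : y ≠ 0) (hu : u ≠ 0) (hP : P ≠ 0) :
    (-(y * u)) * (-y * (u * P))⁻¹ = P⁻¹ := by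
  field_simp

lemma aux18 {K : Type*} [Field K] {d N : ℕ}
    (v : Fin N → Fin d → K) (hnz : ∀ j, v j ≠ 0) (L : Submodule K (Fin d → K)) :
    ∀ (m : ℕ) (n : Fin N → ℕ), (∑ j, n j * 2 ^ (N - 1 - (j : ℕ))) < m →
      (∀ j, n j ≠ 0 → v j ∈ L) →
      Submodule.span K (Set.range fun j : {j : Fin N // n j ≠ 0} => v (j : Fin N)) = L →
      (∏ j, algebraMap (MvPolynomial (Fin d) K)
          (FractionRing (MvPolynomial (Fin d) K)) (linForm (v j)) ^ n j)⁻¹ ∈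
        Submodule.span K
          {x : FractionRing (MvPolynomial (Fin d) K) | ∃ n : Fin N → ℕ,
            (∀ j, n j ≠ 0 → v j ∈ L) ∧
            Submodule.span K (Set.range fun j : {j : Fin N // n j ≠ 0} => v (j : Fin N)) = L ∧
            LinearIndependent K (fun j : {j : Fin N // n j ≠ 0} => v (j : Fin N)) ∧
            x = (∏ j, algebraMap (MvPolynomial (Fin d) K)
                (FractionRing (MvPolynomial (Fin d) K)) (linForm (v j)) ^ n j)⁻¹} := by
  classical
  intro m
  induction m using Nat.strong_induction_on with
  | _ m ih =>
  intro n hm h1 h2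
  by_cases hind : LinearIndependent K (fun j : {j : Fin N // n j ≠ 0} => v (j : Fin N))
  · exact Submodule.subset_span ⟨n, h1, h2, hind, rfl⟩
  obtain ⟨g, hg0, j1, hj1⟩ := Fintype.not_linearIndependent_iff.mp hind
  set F := FractionRing (MvPolynomial (Fin d) K) with hF
  set f : Fin N → F := fun j => algebraMap (MvPolynomial (Fin d) K) F (linForm (v j)) with hf
  set a : Fin N → F := fun j => algebraMap K F (if h : n j ≠ 0 then g ⟨j, h⟩ else 0) with ha
  set c : Fin N → K := fun j => if h : n j ≠ 0 then g ⟨j, h⟩ else 0 with hc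
  set Cs : Finset (Fin N) := Finset.univ.filter (fun j => c j ≠ 0) with hCs
  have hmemCs : ∀ j, j ∈ Cs ↔ c j ≠ 0 := by intro j; simp [hCs]
  have hCsub : ∀ j ∈ Cs, n j ≠ 0 := by
    intro j hj
    by_contra h
    exact (hmemCs j).mp hj (by simp [hc, h])
  have hCne : Cs.Nonempty := by
    refine ⟨j1.1, (hmemCs _).mpr ?_⟩
    simpa [hc, j1.2] using hj1
  set j0 := Cs.max' hCne with hj0def
  have hj0 : j0 ∈ Cs := Cs.max'_mem hCne
  -- the vector relation
  have hrel : ∑ j ∈ Cs, c j • v j = 0 := by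
    have e1 : ∑ j ∈ Cs, c j • v j = ∑ j : Fin N, c j • v j := by
      rw [hCs]
      refine Finset.sum_filter_of_ne ?_
      intro x _ hx hcx
      exact hx (by simp [hcx])
    have e2 : ∑ j : Fin N, c j • v j = ∑ j : {j : Fin N // n j ≠ 0}, g j • v j := by
      rw [← Finset.sum_filter_of_ne (p := fun j => n j ≠ 0)
        (by intro x _ hx hnx; exact hx (by simp [hc, hnx]))]
      rw [Finset.sum_subtype (p := fun j => n j ≠ 0) (Finset.univ.filter (fun j => n j ≠ 0))
        (by intro x; simp) (fun j => c j • v j)]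
      refine Fintype.sum_congr _ _ ?_
      intro x
      simp [hc, x.2]
    rw [e1, e2, hg0]
  -- map to the fraction field
  have hCmap : ∀ b : K, algebraMap (MvPolynomial (Fin d) K) F (MvPolynomial.C b)
      = algebraMap K F b := by
    intro b
    rw [IsScalarTower.algebraMap_apply K (MvPolynomial (Fin d) K) F]
    rfl
  have hrelF : ∑ j ∈ Cs, algebraMap K F (c j) * f j = 0 := by
    have := congrArg (fun p => algebraMap (MvPolynomial (Fin d) K) F (linForm p)) hrel
    simp only [linForm_sum, map_sum, map_mul] at this
    rw [show linForm (0 : Fin d → K) = 0 by simp [linForm]] at this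
    simpa [hCmap, hf] using this
  have hfne : ∀ j, f j ≠ 0 := by
    intro j
    exact (map_ne_zero_iff _ (IsFractionRing.injective (MvPolynomial (Fin d) K) F)).mpr
      (linForm_ne_zero (hnz j))
  have hPne : ∀ μ : Fin N → ℕ, (∏ k, f k ^ μ k) ≠ 0 := by
    intro μ
    exact Finset.prod_ne_zero_iff.mpr fun k _ => pow_ne_zero _ (hfne k)
  have haK : ∀ b : K, b ≠ 0 → algebraMap K F b ≠ 0 := by
    intro b hb
    exact (map_ne_zero_iff _ (algebraMap K F).injective).mpr hb
  -- modified exponent vectors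
  set n' : Fin N → (Fin N → ℕ) := fun j k =>
    if k = j then n k - 1 else if k = j0 then n k + 1 else n k with hn'
  have hptw : ∀ j ∈ Cs.erase j0, ∀ k,
      n' j k + (if k = j then 1 else 0) = n k + (if k = j0 then 1 else 0) := by
    intro j hj k
    have hjne : j ≠ j0 := Finset.ne_of_mem_erase hj
    have hnj : n j ≠ 0 := hCsub j (Finset.mem_of_mem_erase hj)
    by_cases h : k = j
    · subst h; simp [hn', hjne]; omega
    · by_cases h0 : k = j0 <;> simp [hn', h, h0, Ne.symm hjne]
  have hprod : ∀ (i : Fin N) (μ : Fin N → ℕ),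
      (∏ k, f k ^ (μ k + if k = i then 1 else 0)) = f i * ∏ k, f k ^ μ k := by
    intro i μ
    simp only [pow_add, Finset.prod_mul_distrib]
    rw [mul_comm]
    congr 1
    rw [show (∏ k, f k ^ (if k = i then 1 else 0)) = ∏ k, (if k = i then f k else 1) by
      refine Finset.prod_congr rfl ?_; intro k _; split <;> simp]
    simp [Finset.prod_ite_eq']
  have hclaim : ∀ j ∈ Cs.erase j0,
      f j * ∏ k, f k ^ n' j k = f j0 * ∏ k, f k ^ n k := by
    intro j hj
    rw [← hprod j (n' j), ← hprod j0 n]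
    exact Finset.prod_congr rfl fun k _ => by rw [hptw j hj k]
  have hc0 : c j0 ≠ 0 := (hmemCs j0).mp hj0
  have hsumE : ∑ j ∈ Cs.erase j0, algebraMap K F (c j) * f j
      = -(algebraMap K F (c j0) * f j0) := by
    have h := hrelF
    rw [← Finset.add_sum_erase _ _ hj0] at h
    exact eq_neg_of_add_eq_zero_right h
  set P := ∏ k, f k ^ n k with hP
  have hQ : ∀ j ∈ Cs.erase j0, (∏ k, f k ^ n' j k)⁻¹ = f j * (f j0 * P)⁻¹ := by
    intro j hj
    exact fieldaux1 _ _ _ _ (hclaim j hj) (hfne j) (hPne _)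
  have hx : P⁻¹ = ∑ j ∈ Cs.erase j0, (-(c j) / c j0) • (∏ k, f k ^ n' j k)⁻¹ := by
    have e : ∀ j ∈ Cs.erase j0, (-(c j) / c j0) • (∏ k, f k ^ n' j k)⁻¹
        = (algebraMap K F (c j) * f j) * (-(algebraMap K F (c j0)) * (f j0 * P))⁻¹ := by
      intro j hj
      rw [hQ j hj, Algebra.smul_def, map_div₀, map_neg]
      exact fieldaux2 _ _ _ _ (haK _ hc0) (mul_ne_zero (hfne _) (hPne _))
    rw [Finset.sum_congr rfl e, ← Finset.sum_mul, hsumE]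
    exact (fieldaux3 _ _ _ (haK _ hc0) (hfne _) (hPne _)).symm
  rw [hx]
  refine Submodule.sum_mem _ ?_
  intro j hj
  refine Submodule.smul_mem _ _ ?_
  have hjne : j ≠ j0 := Finset.ne_of_mem_erase hj
  have hjC : j ∈ Cs := Finset.mem_of_mem_erase hj
  have hnj : n j ≠ 0 := hCsub j hjC
  have h1' : ∀ k, n' j k ≠ 0 → v k ∈ L := by
    intro k hk
    by_cases h : k = j
    · subst h; exact h1 _ hnj
    · by_cases h0 : k = j0
      · subst h0; exact h1 _ (hCsub _ hj0)
      · apply h1 k; simpa [hn', h, h0] using hk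
  have hsupp' : ∀ k ∈ Cs, k ≠ j → n' j k ≠ 0 := by
    intro k hk hkj
    by_cases h0 : k = j0
    · subst h0; simp [hn', hkj]
    · simp [hn', hkj, h0, hCsub k hk]
  have h2' : Submodule.span K
      (Set.range fun i : {i : Fin N // n' j i ≠ 0} => v (i : Fin N)) = L := by
    apply le_antisymm
    · rw [Submodule.span_le]
      rintro x ⟨⟨k, hk⟩, rfl⟩
      exact h1' k hk
    · rw [← h2, Submodule.span_le]
      rintro x ⟨⟨k, hk⟩, rfl⟩
      simp only
      by_cases hkj : k = j
      · subst hkj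
        have hrel' : c k • v k = -∑ i ∈ Cs.erase k, c i • v i := by
          refine eq_neg_of_add_eq_zero_left ?_
          exact (Finset.add_sum_erase Cs (fun i => c i • v i) hjC).trans hrel
        have hsummem : (∑ i ∈ Cs.erase k, c i • v i) ∈ Submodule.span K
            (Set.range fun i : {i : Fin N // n' k i ≠ 0} => v (i : Fin N)) := by
          refine Submodule.sum_mem _ ?_
          intro i hi
          refine Submodule.smul_mem _ _ (Submodule.subset_span ?_)
          exact ⟨⟨i, hsupp' i (Finset.mem_of_mem_erase hi) (Finset.ne_of_mem_erase hi)⟩, rfl⟩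
        have hvk : v k = (c k)⁻¹ • (c k • v k) := by
          rw [smul_smul, inv_mul_cancel₀ ((hmemCs k).mp hjC), one_smul]
        rw [hvk, hrel']
        exact Submodule.smul_mem _ _ (Submodule.neg_mem _ hsummem)
      · refine Submodule.subset_span ⟨⟨k, ?_⟩, rfl⟩
        by_cases h0 : k = j0
        · subst h0; simp [hn', hkj]
        · simp [hn', hkj, h0, hk]
  have hmeas : (∑ k, n' j k * 2 ^ (N - 1 - (k : ℕ))) < ∑ k, n k * 2 ^ (N - 1 - (k : ℕ)) := by
    have haux : ∀ (i : Fin N) (μ : Fin N → ℕ),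
        ∑ k, (μ k + if k = i then 1 else 0) * 2 ^ (N - 1 - (k : ℕ))
          = (∑ k, μ k * 2 ^ (N - 1 - (k : ℕ))) + 2 ^ (N - 1 - (i : ℕ)) := by
      intro i μ
      simp [add_mul, Finset.sum_add_distrib, ite_mul, Finset.sum_ite_eq']
    have key : (∑ k, n' j k * 2 ^ (N - 1 - (k : ℕ))) + 2 ^ (N - 1 - (j : ℕ))
        = (∑ k, n k * 2 ^ (N - 1 - (k : ℕ))) + 2 ^ (N - 1 - (j0 : ℕ)) := by
      rw [← haux j (n' j), ← haux j0 n]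
      exact Finset.sum_congr rfl fun k _ => by rw [hptw j hj k]
    have hlt : (j : ℕ) < (j0 : ℕ) := Fin.lt_iff_val_lt_val.mp
      (lt_of_le_of_ne (Cs.le_max' j hjC) hjne)
    have hj0N : (j0 : ℕ) ≤ N - 1 := by have := j0.isLt; omega
    have hpow : 2 ^ (N - 1 - (j0 : ℕ)) < 2 ^ (N - 1 - (j : ℕ)) :=
      Nat.pow_lt_pow_right (by norm_num) (by omega)
    omega
  exact ih _ hm (n' j) hmeas h1' h2'


/-- `G_{Δ∩L}` (spanned by fractions `1/∏_{j∈J} v_j^{n_j}` with `n_j > 0`, `v_j ∈ L`,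
and `(v_j, j∈J)` spanning `L`) is already spanned by those fractions whose denominator
vectors form a basis of `L`; together with the two-dimensional instance
`1/((v₁+v₂)v₁v₂) = 1/((v₁+v₂)²v₂) + 1/((v₁+v₂)²v₁)`. -/
theorem stmt18 {K : Type*} [Field K] (d N : ℕ)
    (v : Fin N → Fin d → K)
    (hnz : ∀ j, v j ≠ 0)
    (hncol : ∀ j k : Fin N, j ≠ k → ∀ c : K, v j ≠ c • v k)
    (L : Submodule K (Fin d → K))
    (hL : ∃ S : Set (Fin N), L = Submodule.span K (v '' S)) :
    (Submodule.span K
        {x : FractionRing (MvPolynomial (Fin d) K) | ∃ n : Fin N → ℕ,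
          (∀ j, n j ≠ 0 → v j ∈ L) ∧
          Submodule.span K (Set.range fun j : {j : Fin N // n j ≠ 0} => v (j : Fin N)) = L ∧
          x = (∏ j, algebraMap (MvPolynomial (Fin d) K)
              (FractionRing (MvPolynomial (Fin d) K)) (linForm (v j)) ^ n j)⁻¹}
      = Submodule.span K
        {x : FractionRing (MvPolynomial (Fin d) K) | ∃ n : Fin N → ℕ,
          (∀ j, n j ≠ 0 → v j ∈ L) ∧
          Submodule.span K (Set.range fun j : {j : Fin N // n j ≠ 0} => v (j : Fin N)) = L ∧
          LinearIndependent K (fun j : {j : Fin N // n j ≠ 0} => v (j : Fin N)) ∧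
          x = (∏ j, algebraMap (MvPolynomial (Fin d) K)
              (FractionRing (MvPolynomial (Fin d) K)) (linForm (v j)) ^ n j)⁻¹})
      ∧
    ∀ a b : ℝ, a ≠ 0 → b ≠ 0 → a + b ≠ 0 →
      1 / ((a + b) * a * b) = 1 / ((a + b) ^ 2 * b) + 1 / ((a + b) ^ 2 * a) := by
  constructor
  · apply le_antisymm
    · rw [Submodule.span_le]
      rintro x ⟨n, h1, h2, rfl⟩
      exact aux18 v hnz L (∑ j, n j * 2 ^ (N - 1 - (j : ℕ)) + 1) n (Nat.lt_succ_self _) h1 h2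
    · exact Submodule.span_mono (fun x hx => by
        obtain ⟨n, h1, h2, _, hx⟩ := hx
        exact ⟨n, h1, h2, hx⟩)
  · intro a b ha hb hab
    field_simp
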